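/- Let V be a normed vector space over ℂ, let Ψ₁, …, Ψ_s ∈ V be linearly independent, let u₁, …, u_s ∈ ℂ, φ ∈ ℝ, ε > 0, let i ∈ {1, …, s} be a fixed index, and let k₁, …, k_s ∈ ℂ. For each j, let g_j be a V-valued function of (r, θ) ∈ (0, ∞) × (φ − π/2 − ε, φ + π/2 + ε) such that g_j(r, θ) → 0 as r → 0⁺, uniformly in θ. Suppose that ∑_{j=1}^s k_j · exp((u_i − u_j)/(r·exp(i·θ))) · (Ψ_j + g_j(r, θ)) converges to Ψ_i as r → 0⁺, uniformly for θ ∈ (φ − π/2 − ε, φ + π/2 + ε). Then k_j = δ_{ij} for all j (i.e. k_i = 1 and k_j = 0 for j ≠ i). -/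

import Mathlib

open Real


lemma sector_theta (z : ℂ) (hz : z ≠ 0) (φ ε : ℝ) (hε : 0 < ε) :
    ∃ θ ∈ Set.Ioo (φ - π/2 - ε) (φ + π/2 + ε),
      0 < (z * Complex.exp (-(θ:ℂ) * Complex.I)).re := by
  have hπ : (0:ℝ) < π := Real.pi_pos
  set α := z.arg with hα
  have h2π : (0:ℝ) < 2 * π := by linarith
  set β' := toIocMod h2π (-π) (α - φ) with hβ'
  have hmem : β' ∈ Set.Ioc (-π) (-π + 2*π) := toIocMod_mem_Ioc h2π _ _
  have hβ'lo : -π < β' := hmem.1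
  have hβ'hi : β' ≤ π := by have := hmem.2; linarith
  set L : ℝ := π/2 + ε/2 with hL
  have hL0 : 0 < L := by positivity
  set t : ℝ := max (-L) (min β' L) with ht
  clear_value β'
  have hLval : L = π/2 + ε/2 := hL
  clear_value L
  have htlo : -L ≤ t := le_max_left _ _
  have hthi : t ≤ L := max_le (by linarith) (min_le_right _ _)
  clear_value t
  have hdiff : -(π/2) < β' - t ∧ β' - t < π/2 := by
    rcases lt_or_ge β' (-L) with h1 | h1
    · have hmin : min β' L = β' := min_eq_left (by linarith)
      have htval : t = -L := by rw [ht, hmin]; exact max_eq_left h1.le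
      constructor <;> rw [htval] <;> [linarith; linarith]
    · rcases le_or_gt β' L with h2 | h2
      · have htval : t = β' := by rw [ht, min_eq_left h2]; exact max_eq_right h1
        constructor <;> rw [htval] <;> [linarith; linarith]
      · have htval : t = L := by
          rw [ht, min_eq_right h2.le]; exact max_eq_right (by linarith)
        constructor <;> rw [htval] <;> [linarith; linarith]
  refine ⟨φ + t, ⟨by linarith, by linarith⟩, ?_⟩
  have key : (z * Complex.exp (-((φ + t : ℝ):ℂ) * Complex.I)).re
      = ‖z‖ * Real.cos (α - (φ + t)) := by
    conv_lhs => rw [← Complex.norm_mul_exp_arg_mul_I z]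
    rw [mul_assoc, ← Complex.exp_add, ← hα]
    have : (α:ℂ) * Complex.I + -((φ + t : ℝ):ℂ) * Complex.I = ((α - (φ+t) : ℝ):ℂ) * Complex.I := by
      push_cast; ring
    rw [this, Complex.re_ofReal_mul, Complex.exp_ofReal_mul_I_re]
  rw [key]
  have habs : 0 < ‖z‖ := norm_pos_iff.mpr hz
  have hcosarg : Real.cos (α - (φ + t)) = Real.cos (β' - t) := by
    have heq : α - (φ + t) = (β' - t) + (toIocDiv h2π (-π) (α - φ) : ℤ) * (2*π) := by
      have := self_sub_toIocMod h2π (-π) (α - φ)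
      rw [zsmul_eq_mul] at this
      rw [← hβ'] at this
      linarith [this]
    rw [heq, Real.cos_add_int_mul_two_pi]
  rw [hcosarg]
  have hcos : 0 < Real.cos (β' - t) :=
    Real.cos_pos_of_mem_Ioo ⟨hdiff.1, hdiff.2⟩
  exact mul_pos habs hcos


lemma arith_aux (b C K' : ℝ) (hb : 0 < b) (hC : 0 < C) (hK' : 0 ≤ K') :
    C * (K' * (b / (2 * C * (K' + 1)))) < b / 2 := by
  have h : C * (K' * (b / (2 * C * (K' + 1)))) = K' * b / (2 * (K' + 1)) := by
    field_simp
  rw [h, div_lt_div_iff₀ (by positivity) (by norm_num)]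
  nlinarith

lemma aux_vanish {V : Type*} [NormedAddCommGroup V] [NormedSpace ℂ V]
    {s : ℕ} {Ψ : Fin s → V} (hΨ : LinearIndependent ℂ Ψ)
    (u : Fin s → ℂ) (φ ε : ℝ) (i : Fin s) (k : Fin s → ℂ)
    (g : Fin s → ℝ → ℝ → V)
    (hg : ∀ j, ∀ ε' > (0 : ℝ), ∃ δ > (0 : ℝ), ∀ r ∈ Set.Ioo (0 : ℝ) δ,
      ∀ θ ∈ Set.Ioo (φ - π/2 - ε) (φ + π/2 + ε), ‖g j r θ‖ < ε')
    (hconv : ∀ ε' > (0 : ℝ), ∃ δ > (0 : ℝ), ∀ r ∈ Set.Ioo (0 : ℝ) δ,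
      ∀ θ ∈ Set.Ioo (φ - π/2 - ε) (φ + π/2 + ε),
      ‖(∑ j, (k j * Complex.exp ((u i - u j) / ((r : ℂ) * Complex.exp (Complex.I * (θ : ℂ)))))
          • (Ψ j + g j r θ)) - Ψ i‖ < ε')
    (θ : ℝ) (hθ : θ ∈ Set.Ioo (φ - π/2 - ε) (φ + π/2 + ε))
    (j : Fin s) (hwj : 0 < ((u i - u j) * Complex.exp (-(θ:ℂ) * Complex.I)).re)
    (hkj : k j ≠ 0) : False := by
  classical
  set w : Fin s → ℂ := fun l => (u i - u l) * Complex.exp (-(θ:ℂ) * Complex.I) with hw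
  set S : Finset (Fin s) := Finset.univ.filter (fun l => 0 < (w l).re ∧ k l ≠ 0) with hS
  have hjS : j ∈ S := by simp [hS, hwj, hkj]; exact hwj
  obtain ⟨j0, hj0S, hmax⟩ := S.exists_max_image (fun l => (w l).re) ⟨j, hjS⟩
  have hj0 : 0 < (w j0).re ∧ k j0 ≠ 0 := by simpa [hS] using hj0S
  set M : ℝ := (w j0).re with hM
  have hM0 : 0 < M := hj0.1
  have hkj0 : k j0 ≠ 0 := hj0.2
  -- the linear map and antilipschitz constant
  set f : (Fin s → ℂ) →ₗ[ℂ] V :=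
    LinearMap.lsum ℂ (fun _ ↦ ℂ) ℕ (fun l ↦ LinearMap.id.smulRight (Ψ l)) with hf
  have hfapp : ∀ d : Fin s → ℂ, f d = ∑ l, d l • Ψ l := by
    intro d
    simp [hf, LinearMap.lsum_apply]
  have hfker : LinearMap.ker f = ⊥ := Fintype.linearIndependent_iff'.mp hΨ
  obtain ⟨K, hK0, hAL⟩ := f.exists_antilipschitzWith hfker
  set C : ℝ := (K : ℝ) with hC
  have hC0 : 0 < C := hK0
  have hlow : ∀ d : Fin s → ℂ, ‖d j0‖ ≤ C * ‖f d‖ := by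
    intro d
    refine (norm_le_pi_norm d j0).trans ?_
    have := hAL.le_mul_dist d 0
    simpa [dist_zero_right, map_zero] using this
  set K' : ℝ := ∑ l, ‖k l‖ with hK'
  have hK'0 : 0 ≤ K' := Finset.sum_nonneg (fun l _ => norm_nonneg _)
  set b : ℝ := ‖k j0‖ with hb
  have hb0 : 0 < b := norm_pos_iff.mpr hkj0
  clear_value C K' b
  set t2 : ℝ := b / (2 * C) with ht2
  have ht20 : 0 < t2 := div_pos hb0 (by linarith)
  clear_value t2
  set εg : ℝ := b / (2 * C * (K' + 1)) with hεg
  have hεg0 : 0 < εg := div_pos hb0 (by nlinarith)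
  clear_value εg
  choose δf hδf0 hδf using fun l => hg l εg hεg0
  have hne : (Finset.univ : Finset (Fin s)).Nonempty := ⟨j, Finset.mem_univ j⟩
  set δg : ℝ := Finset.univ.inf' hne δf with hδg
  have hδg0 : 0 < δg := by
    rw [hδg, Finset.lt_inf'_iff]
    exact fun l _ => hδf0 l
  obtain ⟨δc, hδc0, hδc⟩ := hconv 1 one_pos
  -- choose r small
  have hexp : Filter.Tendsto (fun r : ℝ => Real.exp (-(M / r))) (nhdsWithin 0 (Set.Ioi 0))
      (nhds 0) := by
    have h2 : Filter.Tendsto (fun r : ℝ => M / r) (nhdsWithin 0 (Set.Ioi 0)) Filter.atTop :=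
      (tendsto_inv_nhdsGT_zero.const_mul_atTop hM0).congr
        (fun r => (div_eq_mul_inv M r).symm)
    have h3 : Filter.Tendsto (fun r : ℝ => -(M / r)) (nhdsWithin 0 (Set.Ioi 0)) Filter.atBot :=
      Filter.tendsto_neg_atBot_iff.mpr h2
    exact Real.tendsto_exp_atBot.comp h3
  have hev1 : ∀ᶠ r in nhdsWithin 0 (Set.Ioi 0),
      Real.exp (-(M / r)) < t2 / (‖Ψ i‖ + 1) :=
    hexp.eventually (gt_mem_nhds (by positivity))
  have hev2 : ∀ᶠ r in nhdsWithin 0 (Set.Ioi 0), r < min δg δc :=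
    eventually_nhdsWithin_of_eventually_nhds (gt_mem_nhds (lt_min hδg0 hδc0))
  have hev3 : ∀ᶠ r in nhdsWithin (0:ℝ) (Set.Ioi 0), 0 < r :=
    eventually_mem_nhdsWithin
  obtain ⟨r, hre, hrlt', hr0'⟩ := (hev1.and (hev2.and hev3)).exists
  rw [lt_min_iff] at hrlt'
  -- rewrite the exponents
  have hrc : (r : ℂ) ≠ 0 := by exact_mod_cast hr0'.ne'
  have hEinv : (Complex.exp (Complex.I * (θ:ℂ)))⁻¹ = Complex.exp (-(θ:ℂ) * Complex.I) := by
    apply inv_eq_of_mul_eq_one_right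
    rw [← Complex.exp_add]
    have : Complex.I * (θ:ℂ) + -(θ:ℂ) * Complex.I = 0 := by ring
    rw [this, Complex.exp_zero]
  have hexpeq : ∀ l, (u i - u l) / ((r : ℂ) * Complex.exp (Complex.I * (θ : ℂ))) = w l / r := by
    intro l
    rw [div_mul_eq_div_div_swap, div_eq_mul_inv (u i - u l), hEinv]
  -- the rescaled coefficients
  set d : Fin s → ℂ := fun l => k l * Complex.exp ((w l - w j0) / (r:ℂ)) with hd
  have hcoef : ∀ l, k l * Complex.exp (w l / (r:ℂ))
      = Complex.exp (w j0 / (r:ℂ)) * d l := by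
    intro l
    rw [hd]
    have harg : w j0 / (r:ℂ) + (w l - w j0) / (r:ℂ) = w l / (r:ℂ) := by
      rw [← add_div]; ring_nf
    rw [show Complex.exp (w j0 / (r:ℂ)) * (k l * Complex.exp ((w l - w j0) / (r:ℂ)))
        = k l * (Complex.exp (w j0 / (r:ℂ)) * Complex.exp ((w l - w j0) / (r:ℂ))) by ring,
      ← Complex.exp_add, harg]
  set X : V := ∑ l, d l • (Ψ l + g l r θ) with hX
  -- main convergence bound at (r, θ)
  have hcv := hδc r ⟨hr0', hrlt'.2⟩ θ hθ
  have hsum : (∑ l, (k l * Complex.exp ((u i - u l) /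
      ((r : ℂ) * Complex.exp (Complex.I * (θ : ℂ))))) • (Ψ l + g l r θ))
      = Complex.exp (w j0 / (r:ℂ)) • X := by
    rw [hX, Finset.smul_sum]
    refine Finset.sum_congr rfl (fun l _ => ?_)
    rw [hexpeq l, hcoef l, ← smul_smul]
  rw [hsum] at hcv
  -- norm computations
  have hnormexp : ∀ z : ℂ, ‖Complex.exp (z / (r:ℂ))‖ = Real.exp (z.re / r) := by
    intro z
    rw [Complex.norm_exp, Complex.div_ofReal_re]
  have hXbound : ‖X‖ < t2 := by
    have h1 : ‖Complex.exp (w j0 / (r:ℂ)) • X‖ ≤ 1 + ‖Ψ i‖ := by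
      have := norm_sub_norm_le (Complex.exp (w j0 / (r:ℂ)) • X) (Ψ i)
      linarith [hcv, this]
    rw [norm_smul, hnormexp] at h1
    have hEpos : 0 < Real.exp (M / r) := Real.exp_pos _
    have h2 : ‖X‖ ≤ (1 + ‖Ψ i‖) / Real.exp (M / r) := by
      rw [le_div_iff₀ hEpos]
      calc ‖X‖ * Real.exp (M / r) = Real.exp (M / r) * ‖X‖ := by ring
        _ ≤ 1 + ‖Ψ i‖ := h1
    have h3 : (1 + ‖Ψ i‖) / Real.exp (M / r) = (‖Ψ i‖ + 1) * Real.exp (-(M / r)) := by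
      rw [Real.exp_neg]; ring
    have h4 : (‖Ψ i‖ + 1) * Real.exp (-(M / r)) < (‖Ψ i‖ + 1) * (t2 / (‖Ψ i‖ + 1)) :=
      mul_lt_mul_of_pos_left hre (by positivity)
    have h5 : (‖Ψ i‖ + 1) * (t2 / (‖Ψ i‖ + 1)) = t2 := by
      field_simp
    linarith [h2, h3 ▸ h2, h4, h5 ▸ h4]
  -- bounds on d
  have hdle : ∀ l, ‖d l‖ ≤ ‖k l‖ := by
    intro l
    by_cases hkl : k l = 0
    · simp [hd, hkl]
    · have hle : (w l).re ≤ M := by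
        by_cases hpos : 0 < (w l).re
        · exact hmax l (by simp [hS, hpos, hkl])
        · linarith [not_lt.mp hpos, hM0]
      rw [hd]
      simp only [norm_mul, hnormexp]
      have : Real.exp ((w l - w j0).re / r) ≤ 1 := by
        rw [Real.exp_le_one_iff]
        apply div_nonpos_of_nonpos_of_nonneg _ hr0'.le
        simp only [Complex.sub_re]
        linarith
      calc ‖k l‖ * Real.exp ((w l - w j0).re / r) ≤ ‖k l‖ * 1 :=
        mul_le_mul_of_nonneg_left this (norm_nonneg _)
      _ = ‖k l‖ := mul_one _
  have hdj0 : ‖d j0‖ = ‖k j0‖ := by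
    rw [hd]
    simp
  -- split X
  set G : V := ∑ l, d l • g l r θ with hG
  have hXsplit : X = f d + G := by
    rw [hX, hfapp, hG, ← Finset.sum_add_distrib]
    exact Finset.sum_congr rfl (fun l _ => smul_add _ _ _)
  have hGbound : ‖G‖ ≤ K' * εg := by
    rw [hG]
    calc ‖∑ l, d l • g l r θ‖ ≤ ∑ l, ‖d l • g l r θ‖ := norm_sum_le _ _
      _ ≤ ∑ l, ‖k l‖ * εg := by
          apply Finset.sum_le_sum
          intro l _
          rw [norm_smul]
          have hgl : ‖g l r θ‖ < εg :=
            hδf l r ⟨hr0', lt_of_lt_of_le hrlt'.1 (Finset.inf'_le _ (Finset.mem_univ l))⟩ θ hθ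
          exact mul_le_mul (hdle l) hgl.le (norm_nonneg _) (norm_nonneg _)
      _ = K' * εg := by rw [hK', Finset.sum_mul]
  have hfd : ‖f d‖ ≤ ‖X‖ + K' * εg := by
    have : f d = X - G := by rw [hXsplit]; abel
    rw [this]
    calc ‖X - G‖ ≤ ‖X‖ + ‖G‖ := norm_sub_le _ _
      _ ≤ ‖X‖ + K' * εg := by linarith
  -- final contradiction
  have hmain : b ≤ C * ‖f d‖ := by
    rw [hb, ← hdj0]
    exact hlow d
  have h6 : C * ‖f d‖ ≤ C * ‖X‖ + C * (K' * εg) := by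
    calc C * ‖f d‖ ≤ C * (‖X‖ + K' * εg) := mul_le_mul_of_nonneg_left hfd hC0.le
      _ = C * ‖X‖ + C * (K' * εg) := by ring
  have h7 : C * ‖X‖ < C * t2 := mul_lt_mul_of_pos_left hXbound hC0
  have h8 : C * t2 = b / 2 := by rw [ht2]; field_simp
  have h9 : C * (K' * εg) < b / 2 := by
    rw [hεg]; exact arith_aux b C K' hb0 hC0 hK'0
  linarith


lemma arith_aux2 (a K : ℝ) (ha : 0 < a) (hK : 0 ≤ K) :
    K * (a / (4 * (K + 1))) ≤ a / 4 := by
  have h : K * (a / (4 * (K + 1))) = K * a / (4 * (K + 1)) := by ring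
  rw [h, div_le_div_iff₀ (by positivity) (by norm_num)]
  nlinarith

section main
variable {V : Type*} [NormedAddCommGroup V] [NormedSpace ℂ V]
  {s : ℕ} {Ψ : Fin s → V}

theorem stmt_2' (hΨ : LinearIndependent ℂ Ψ)
    (u : Fin s → ℂ) (φ ε : ℝ) (hε : 0 < ε) (i : Fin s) (k : Fin s → ℂ)
    (g : Fin s → ℝ → ℝ → V)
    (hg : ∀ j, ∀ ε' > (0 : ℝ), ∃ δ > (0 : ℝ), ∀ r ∈ Set.Ioo (0 : ℝ) δ,
      ∀ θ ∈ Set.Ioo (φ - π/2 - ε) (φ + π/2 + ε), ‖g j r θ‖ < ε')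
    (hconv : ∀ ε' > (0 : ℝ), ∃ δ > (0 : ℝ), ∀ r ∈ Set.Ioo (0 : ℝ) δ,
      ∀ θ ∈ Set.Ioo (φ - π/2 - ε) (φ + π/2 + ε),
      ‖(∑ j, (k j * Complex.exp ((u i - u j) / ((r : ℂ) * Complex.exp (Complex.I * (θ : ℂ)))))
          • (Ψ j + g j r θ)) - Ψ i‖ < ε')
    (hzero : ∀ j, u j ≠ u i → k j = 0) :
    ∀ j, k j = if j = i then 1 else 0 := by
  classical
  have hπ : (0:ℝ) < π := Real.pi_pos
  have hθφ : φ ∈ Set.Ioo (φ - π/2 - ε) (φ + π/2 + ε) := ⟨by linarith, by linarith⟩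
  have hsum : ∑ j', k j' • Ψ j' = Ψ i := by
    by_contra hneq
    set v : V := (∑ j', k j' • Ψ j') - Ψ i with hv
    have hv0 : v ≠ 0 := sub_ne_zero.mpr hneq
    have hvpos : 0 < ‖v‖ := norm_pos_iff.mpr hv0
    set K'' : ℝ := ∑ j', ‖k j'‖ with hK''
    have hK''0 : 0 ≤ K'' := Finset.sum_nonneg (fun l _ => norm_nonneg _)
    clear_value K''
    set εg' : ℝ := ‖v‖ / (4 * (K'' + 1)) with hεg'
    have hεg'0 : 0 < εg' := div_pos hvpos (by linarith)
    clear_value εg'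
    choose δf hδf0 hδf using fun l => hg l εg' hεg'0
    obtain ⟨δc, hδc0, hδc⟩ := hconv (‖v‖/2) (by positivity)
    -- pick r
    by_cases hs0 : s = 0
    · have := i.2; omega
    have hne : (Finset.univ : Finset (Fin s)).Nonempty := ⟨⟨0, Nat.pos_of_ne_zero hs0⟩,
      Finset.mem_univ _⟩
    set δg : ℝ := Finset.univ.inf' hne δf with hδg
    have hδg0 : 0 < δg := by
      rw [hδg, Finset.lt_inf'_iff]; exact fun l _ => hδf0 l
    set r : ℝ := min δg δc / 2 with hr
    have hr0 : 0 < r := by positivity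
    have hrδg : r < δg := by
      rw [hr]; have h := min_le_left δg δc
      have h2 : 0 < min δg δc := lt_min hδg0 hδc0
      linarith
    have hrδc : r < δc := by
      rw [hr]; have h := min_le_right δg δc
      have h2 : 0 < min δg δc := lt_min hδg0 hδc0
      linarith
    have hcv := hδc r ⟨hr0, hrδc⟩ φ hθφ
    have hterm : ∀ l, (k l * Complex.exp ((u i - u l) /
        ((r : ℂ) * Complex.exp (Complex.I * (φ : ℂ))))) • (Ψ l + g l r φ)
        = k l • Ψ l + k l • g l r φ := by
      intro l
      by_cases hul : u l = u i
      · have h0 : u i - u l = 0 := by rw [hul]; ring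
        rw [h0, zero_div, Complex.exp_zero, mul_one, smul_add]
      · rw [hzero l hul]; simp
    rw [Finset.sum_congr rfl (fun l _ => hterm l), Finset.sum_add_distrib] at hcv
    set G' : V := ∑ l, k l • g l r φ with hG'
    have hGb : ‖G'‖ ≤ K'' * εg' := by
      rw [hG']
      calc ‖∑ l, k l • g l r φ‖ ≤ ∑ l, ‖k l • g l r φ‖ := norm_sum_le _ _
        _ ≤ ∑ l, ‖k l‖ * εg' := by
            apply Finset.sum_le_sum
            intro l _
            rw [norm_smul]
            have hgl : ‖g l r φ‖ < εg' :=
              hδf l r ⟨hr0, lt_of_lt_of_le hrδg (Finset.inf'_le _ (Finset.mem_univ l))⟩ φ hθφ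
            exact mul_le_mul_of_nonneg_left hgl.le (norm_nonneg _)
        _ = K'' * εg' := by rw [← Finset.sum_mul, ← hK'']
    have hvnorm : ‖v‖ ≤ ‖(∑ j', k j' • Ψ j') + G' - Ψ i‖ + ‖G'‖ := by
      have : v = ((∑ j', k j' • Ψ j') + G' - Ψ i) - G' := by rw [hv]; abel
      rw [this]
      exact norm_sub_le _ _
    have harith := arith_aux2 ‖v‖ K'' hvpos hK''0
    rw [← hεg'] at harith
    linarith
  intro j'
  have hker := Fintype.linearIndependent_iff.mp hΨ
    (fun l => k l - if l = i then 1 else 0) ?_ j'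
  · exact sub_eq_zero.mp hker
  · have hdelta : ∑ l, (if l = i then (1:ℂ) else 0) • Ψ l = Ψ i := by
      simp [ite_smul]
    calc ∑ l, (k l - if l = i then 1 else 0) • Ψ l
        = (∑ l, k l • Ψ l) - ∑ l, (if l = i then (1:ℂ) else 0) • Ψ l := by
          rw [← Finset.sum_sub_distrib]
          exact Finset.sum_congr rfl (fun l _ => sub_smul _ _ _)
      _ = 0 := by rw [hsum, hdelta, sub_self]

end main

/-- (Analytic content of Lemma 2.3 of the paper.) If
`∑_j k_j · exp((u_i − u_j)/(r e^{iθ})) · (Ψ_j + g_j(r,θ)) → Ψ_i` as `r → 0⁺`, uniformly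
for `θ` in the sector `(φ − π/2 − ε, φ + π/2 + ε)`, with `Ψ_j` linearly independent and
`g_j(r,θ) → 0` uniformly in `θ`, then `k_j = δ_{ij}`. -/
theorem stmt_2 {V : Type*} [NormedAddCommGroup V] [NormedSpace ℂ V]
    {s : ℕ} {Ψ : Fin s → V} (hΨ : LinearIndependent ℂ Ψ)
    (u : Fin s → ℂ) (φ ε : ℝ) (hε : 0 < ε) (i : Fin s) (k : Fin s → ℂ)
    (g : Fin s → ℝ → ℝ → V)
    (hg : ∀ j, ∀ ε' > (0 : ℝ), ∃ δ > (0 : ℝ), ∀ r ∈ Set.Ioo (0 : ℝ) δ,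
      ∀ θ ∈ Set.Ioo (φ - π/2 - ε) (φ + π/2 + ε), ‖g j r θ‖ < ε')
    (hconv : ∀ ε' > (0 : ℝ), ∃ δ > (0 : ℝ), ∀ r ∈ Set.Ioo (0 : ℝ) δ,
      ∀ θ ∈ Set.Ioo (φ - π/2 - ε) (φ + π/2 + ε),
      ‖(∑ j, (k j * Complex.exp ((u i - u j) / ((r : ℂ) * Complex.exp (Complex.I * (θ : ℂ)))))
          • (Ψ j + g j r θ)) - Ψ i‖ < ε') :
    ∀ j, k j = if j = i then 1 else 0 := by
  have hzero : ∀ j, u j ≠ u i → k j = 0 := by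
    intro j hne
    by_contra hk
    obtain ⟨θ, hθ, hw⟩ := sector_theta (u i - u j) (sub_ne_zero.mpr (Ne.symm hne)) φ ε hε
    exact aux_vanish hΨ u φ ε i k g hg hconv θ hθ j hw hk
  exact stmt_2' hΨ u φ ε hε i k g hg hconv hzero
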